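/- Let ν be the Edwards-Sokal joint measure on spins and edges, K the stochastic matrix resampling spins given edges, and T the stochastic matrix resampling edges given spins. If the spin/edge factorization Ent_ν(f) ≤ C·(ν[Ent_ν(f|σ)] + ν[Ent_ν(f|A)]) holds for all f ≥ 0, then the reversible chain P = (K+T)/2 satisfies Ent_ν(Pf) ≤ (1 − 1/(2C))·Ent_ν(f) for all f ≥ 0. -/

import Mathlib

open scoped Classical BigOperators

noncomputable def ent {Ω : Type*} [Fintype Ω] (π f : Ω → ℝ) : ℝ :=
  (∑ x, π x * f x * Real.log (f x)) - (∑ x, π x * f x) * Real.log (∑ x, π x * f x)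

noncomputable def condMean {Ω α : Type*} [Fintype Ω] (ν : Ω → ℝ) (g : Ω → α)
    (f : Ω → ℝ) (x : Ω) : ℝ :=
  (∑ y, if g y = g x then ν y * f y else 0) / (∑ y, if g y = g x then ν y else 0)

noncomputable def avgCondEnt {Ω α : Type*} [Fintype Ω] (ν : Ω → ℝ) (g : Ω → α)
    (f : Ω → ℝ) : ℝ :=
  ∑ x, ν x * f x * (Real.log (f x) - Real.log (condMean ν g f x))

noncomputable def matMulVec {Ω : Type*} [Fintype Ω] (P : Ω → Ω → ℝ) (f : Ω → ℝ) (x : Ω) : ℝ :=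
  ∑ y, P x y * f y

noncomputable def dirForm {Ω : Type*} [Fintype Ω] (π : Ω → ℝ) (P : Ω → Ω → ℝ)
    (f g : Ω → ℝ) : ℝ :=
  ∑ x, π x * f x * (g x - matMulVec P g x)

noncomputable def stepDist {Ω : Type*} [Fintype Ω] (P : Ω → Ω → ℝ) (ζ : Ω → ℝ) (y : Ω) : ℝ :=
  ∑ x, ζ x * P x y

noncomputable def adjointMat {Ω : Type*} [Fintype Ω] (π : Ω → ℝ) (P : Ω → Ω → ℝ)
    (x y : Ω) : ℝ :=
  π y * P y x / π x

noncomputable def matComp {Ω : Type*} [Fintype Ω] (P Q : Ω → Ω → ℝ) (x y : Ω) : ℝ :=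
  ∑ z, P x z * Q z y

/-- Weight of a joint spin/edge (Edwards–Sokal) configuration: `p^{|A|}(1-p)^{|E|-|A|} 1(A ⊆ M(σ))`
with `p = 1 - e^{-β}`. -/
noncomputable def esWeight {V : Type*} [Fintype V] [DecidableEq V]
    (E : Finset (V × V)) (q : ℕ) (β : ℝ) (z : (V → Fin q) × Finset (V × V)) : ℝ :=
  (1 - Real.exp (-β)) ^ z.2.card * Real.exp (-β) ^ (E.card - z.2.card) *
    (if z.2 ⊆ E.filter (fun e => z.1 e.1 = z.1 e.2) then 1 else 0)

/-- The Edwards–Sokal joint measure. -/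
noncomputable def esMeasure {V : Type*} [Fintype V] [DecidableEq V]
    (E : Finset (V × V)) (q : ℕ) (β : ℝ) (z : (V → Fin q) × Finset (V × V)) : ℝ :=
  esWeight E q β z / ∑ w : (V → Fin q) × Finset (V × V), esWeight E q β w

/-- The ferromagnetic `q`-state Potts Gibbs measure: `μ(σ) ∝ exp(-β |D(σ)|)`. -/
noncomputable def pottsMeasure {V : Type*} [Fintype V] [DecidableEq V]
    (E : Finset (V × V)) (q : ℕ) (β : ℝ) (σ : V → Fin q) : ℝ :=
  Real.exp (-β * ((E.filter (fun e => σ e.1 ≠ σ e.2)).card : ℝ)) /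
    ∑ τ : V → Fin q, Real.exp (-β * ((E.filter (fun e => τ e.1 ≠ τ e.2)).card : ℝ))

/-- Swendsen–Wang transition matrix on spin configurations:
`P(σ,τ) = ∑_A ν(A|σ) ν(τ|A)`. -/
noncomputable def swMatrix {V : Type*} [Fintype V] [DecidableEq V]
    (E : Finset (V × V)) (q : ℕ) (β : ℝ) (σ τ : V → Fin q) : ℝ :=
  ∑ A : Finset (V × V),
    (esMeasure E q β (σ, A) / ∑ B : Finset (V × V), esMeasure E q β (σ, B)) *
    (esMeasure E q β (τ, A) / ∑ ρ : V → Fin q, esMeasure E q β (ρ, A))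

section AuxLemmas

variable {Ω α : Type*} [Fintype Ω]

lemma condMean_congr (ν : Ω → ℝ) (g : Ω → α) (f : Ω → ℝ) {x y : Ω}
    (hxy : g x = g y) : condMean ν g f x = condMean ν g f y := by
  unfold condMean
  rw [hxy]

lemma condMean_nonneg (ν : Ω → ℝ) (hν : ∀ x, 0 ≤ ν x) (g : Ω → α) (f : Ω → ℝ)
    (hf : ∀ x, 0 ≤ f x) (x : Ω) : 0 ≤ condMean ν g f x := by
  apply div_nonneg
  · apply Finset.sum_nonneg
    intro y _
    split
    · exact mul_nonneg (hν y) (hf y)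
    · exact le_rfl
  · apply Finset.sum_nonneg
    intro y _
    split
    · exact hν y
    · exact le_rfl

lemma sum_condMean_weight (ν : Ω → ℝ) (hν : ∀ x, 0 ≤ ν x) (g : Ω → α)
    (f F : Ω → ℝ) (hF : ∀ x y, g x = g y → F x = F y) :
    ∑ x, ν x * condMean ν g f x * F x = ∑ x, ν x * f x * F x := by
  have hDcongr : ∀ x y : Ω, g x = g y →
      (∑ z, if g z = g x then ν z else 0) = (∑ z, if g z = g y then ν z else 0) := by
    intro x y h
    apply Finset.sum_congr rfl
    intro z _
    rw [h]
  have hDle : ∀ x : Ω, ν x ≤ ∑ z, if g z = g x then ν z else 0 := by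
    intro x
    have := Finset.single_le_sum (f := fun z => if g z = g x then ν z else 0)
      (fun z _ => by split <;> [exact hν z; exact le_rfl]) (Finset.mem_univ x)
    simpa using this
  have step1 : ∀ x : Ω, ν x * condMean ν g f x * F x
      = ∑ y, if g y = g x then
          (ν y * f y) * (ν x * F x / (∑ z, if g z = g x then ν z else 0)) else 0 := by
    intro x
    unfold condMean
    rw [show (∑ y, if g y = g x then
          (ν y * f y) * (ν x * F x / (∑ z, if g z = g x then ν z else 0)) else 0)
        = (∑ y, if g y = g x then ν y * f y else 0) *
          (ν x * F x / (∑ z, if g z = g x then ν z else 0)) from by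
      rw [Finset.sum_mul]
      apply Finset.sum_congr rfl
      intro y _
      split <;> simp]
    ring
  calc ∑ x, ν x * condMean ν g f x * F x
      = ∑ x, ∑ y, if g y = g x then
          (ν y * f y) * (ν x * F x / (∑ z, if g z = g x then ν z else 0)) else 0 := by
        exact Finset.sum_congr rfl fun x _ => step1 x
    _ = ∑ y, ∑ x, if g y = g x then
          (ν y * f y) * (ν x * F x / (∑ z, if g z = g x then ν z else 0)) else 0 :=
        Finset.sum_comm
    _ = ∑ y, ν y * f y * F y := by
        apply Finset.sum_congr rfl
        intro y _
        have hterm : ∀ x : Ω, (if g y = g x then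
            (ν y * f y) * (ν x * F x / (∑ z, if g z = g x then ν z else 0)) else 0)
            = (if g x = g y then ν x else 0) *
              (ν y * f y * F y / (∑ z, if g z = g y then ν z else 0)) := by
          intro x
          by_cases hxy : g y = g x
          · rw [if_pos hxy, if_pos hxy.symm, hF x y hxy.symm, hDcongr x y hxy.symm]
            ring
          · rw [if_neg hxy, if_neg (fun h => hxy h.symm), zero_mul]
        rw [Finset.sum_congr rfl fun x _ => hterm x, ← Finset.sum_mul]
        by_cases hD : (∑ z, if g z = g y then ν z else 0) = 0
        · have hνy : ν y = 0 := le_antisymm (hD ▸ hDle y) (hν y)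
          rw [hD, hνy]
          simp
        · rw [mul_div_assoc']
          rw [mul_comm, mul_div_assoc, div_self hD, mul_one]

lemma ent_condMean (ν : Ω → ℝ) (hν : ∀ x, 0 ≤ ν x) (g : Ω → α) (f : Ω → ℝ) :
    ent ν (condMean ν g f) = ent ν f - avgCondEnt ν g f := by
  have h1 := sum_condMean_weight ν hν g f (fun x => Real.log (condMean ν g f x))
    (fun x y h => by rw [condMean_congr ν g f h])
  have h2 := sum_condMean_weight ν hν g f (fun _ => (1:ℝ)) (fun _ _ _ => rfl)
  simp only [mul_one] at h2
  unfold ent avgCondEnt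
  rw [h1, h2, show (∑ x, ν x * f x * (Real.log (f x) - Real.log (condMean ν g f x)))
      = (∑ x, ν x * f x * Real.log (f x))
        - ∑ x, ν x * f x * Real.log (condMean ν g f x) from by
    rw [← Finset.sum_sub_distrib]
    exact Finset.sum_congr rfl fun x _ => by ring]
  ring

lemma log_sum_aux {a b c d : ℝ} (ha : 0 ≤ a) (hb : 0 ≤ b) (hc : 0 ≤ c) (hd : 0 ≤ d)
    (hca : c = 0 → a = 0) (hdb : d = 0 → b = 0) :
    (a + b) * (Real.log (a + b) - Real.log (c + d)) ≤
      a * (Real.log a - Real.log c) + b * (Real.log b - Real.log d) := by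
  rcases eq_or_lt_of_le ha with ha0 | ha0
  · rcases eq_or_lt_of_le hb with hb0 | hb0
    · simp [← ha0, ← hb0]
    · have hd0 : 0 < d := by
        rcases eq_or_lt_of_le hd with h | h
        · exact absurd (hdb h.symm) hb0.ne'
        · exact h
      have hlog : Real.log d ≤ Real.log (c + d) := by
        apply Real.log_le_log hd0
        linarith
      have : b * (Real.log b - Real.log (c + d)) ≤ b * (Real.log b - Real.log d) :=
        mul_le_mul_of_nonneg_left (by linarith) hb
      simp only [← ha0, zero_add, zero_mul]
      linarith
  · rcases eq_or_lt_of_le hb with hb0 | hb0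
    · have hc0 : 0 < c := by
        rcases eq_or_lt_of_le hc with h | h
        · exact absurd (hca h.symm) ha0.ne'
        · exact h
      have hlog : Real.log c ≤ Real.log (c + d) := by
        apply Real.log_le_log hc0
        linarith
      have : a * (Real.log a - Real.log (c + d)) ≤ a * (Real.log a - Real.log c) :=
        mul_le_mul_of_nonneg_left (by linarith) ha
      simp only [← hb0, add_zero, zero_mul]
      linarith
    · -- both positive
      have hc0 : 0 < c := by
        rcases eq_or_lt_of_le hc with h | h
        · exact absurd (hca h.symm) ha0.ne'
        · exact h
      have hd0 : 0 < d := by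
        rcases eq_or_lt_of_le hd with h | h
        · exact absurd (hdb h.symm) hb0.ne'
        · exact h
      have hs : 0 < a + b := by linarith
      have ht : 0 < c + d := by linarith
      have key : ∀ u v : ℝ, 0 < u → 0 < v →
          u - v * (a + b) / (c + d) ≤
            u * (Real.log u - Real.log v) - u * (Real.log (a + b) - Real.log (c + d)) := by
        intro u v hu hv
        have hx : 0 < u * (c + d) / (v * (a + b)) := by positivity
        have hlog1 : 1 - (u * (c + d) / (v * (a + b)))⁻¹ ≤
            Real.log (u * (c + d) / (v * (a + b))) := by
          have h := Real.log_le_sub_one_of_pos (inv_pos.mpr hx)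
          rw [Real.log_inv] at h
          linarith
        have hxlog : Real.log (u * (c + d) / (v * (a + b)))
            = (Real.log u - Real.log v) - (Real.log (a + b) - Real.log (c + d)) := by
          rw [Real.log_div (by positivity) (by positivity),
            Real.log_mul (ne_of_gt hu) (ne_of_gt ht),
            Real.log_mul (ne_of_gt hv) (ne_of_gt hs)]
          ring
        have hinv : (u * (c + d) / (v * (a + b)))⁻¹ = v * (a + b) / (u * (c + d)) := by
          rw [inv_div]
        have hmul := mul_le_mul_of_nonneg_left hlog1 (le_of_lt hu)
        rw [hxlog] at hmul
        have hred : u * (1 - (u * (c + d) / (v * (a + b)))⁻¹)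
            = u - v * (a + b) / (c + d) := by
          rw [hinv]
          field_simp
        rw [hred] at hmul
        linarith [hmul]
      have k1 := key a c ha0 hc0
      have k2 := key b d hb0 hd0
      have hsum : c * (a + b) / (c + d) + d * (a + b) / (c + d) = a + b := by
        rw [← add_div, ← add_mul]
        field_simp
      nlinarith [k1, k2]

lemma log_sum_half {a b c d : ℝ} (ha : 0 ≤ a) (hb : 0 ≤ b) (hc : 0 ≤ c) (hd : 0 ≤ d)
    (hca : c = 0 → a = 0) (hdb : d = 0 → b = 0) :
    (a + b) * (Real.log ((a + b) / 2) - Real.log ((c + d) / 2)) ≤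
      a * (Real.log a - Real.log c) + b * (Real.log b - Real.log d) := by
  rcases eq_or_lt_of_le (add_nonneg ha hb) with hab | hab
  · have ha0 : a = 0 := by linarith
    have hb0 : b = 0 := by linarith
    simp [ha0, hb0]
  · have hcd : 0 < c + d := by
      rcases eq_or_lt_of_le (add_nonneg hc hd) with h | h
      · exfalso
        have hc0 : c = 0 := by linarith
        have hd0 : d = 0 := by linarith
        have := hca hc0
        have := hdb hd0
        linarith
      · exact h
    rw [Real.log_div (ne_of_gt hab) two_ne_zero, Real.log_div (ne_of_gt hcd) two_ne_zero]
    have := log_sum_aux ha hb hc hd hca hdb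
    calc (a + b) * (Real.log (a + b) - Real.log 2 - (Real.log (c + d) - Real.log 2))
        = (a + b) * (Real.log (a + b) - Real.log (c + d)) := by ring
      _ ≤ _ := this

lemma ent_avg_le (ν : Ω → ℝ) (hν : ∀ x, 0 ≤ ν x) (g h : Ω → ℝ)
    (hg : ∀ x, 0 ≤ g x) (hh : ∀ x, 0 ≤ h x) :
    ent ν (fun x => (g x + h x) / 2) ≤ (ent ν g + ent ν h) / 2 := by
  set mg := ∑ x, ν x * g x with hmg
  set mh := ∑ x, ν x * h x with hmh
  have hmg0 : 0 ≤ mg := Finset.sum_nonneg fun x _ => mul_nonneg (hν x) (hg x)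
  have hmh0 : 0 ≤ mh := Finset.sum_nonneg fun x _ => mul_nonneg (hν x) (hh x)
  have hmu : ∑ x, ν x * ((g x + h x) / 2) = (mg + mh) / 2 := by
    rw [hmg, hmh, ← Finset.sum_add_distrib, Finset.sum_div]
    exact Finset.sum_congr rfl fun x _ => by ring
  have main : ∑ x, (ν x * ((g x + h x) / 2) * Real.log ((g x + h x) / 2)
        - ν x * ((g x + h x) / 2) * Real.log ((mg + mh) / 2))
      ≤ ∑ x, ((ν x * g x * Real.log (g x) - ν x * g x * Real.log mg)
        + (ν x * h x * Real.log (h x) - ν x * h x * Real.log mh)) / 2 := by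
    apply Finset.sum_le_sum
    intro x _
    rcases eq_or_lt_of_le (hν x) with h0 | h0
    · simp [← h0]
    · have hca : mg = 0 → g x = 0 := by
        intro hc
        have := (Finset.sum_eq_zero_iff_of_nonneg
          (fun y _ => mul_nonneg (hν y) (hg y))).mp (hmg ▸ hc) x (Finset.mem_univ x)
        rcases mul_eq_zero.mp this with h' | h'
        · exact absurd h' h0.ne'
        · exact h'
      have hdb : mh = 0 → h x = 0 := by
        intro hd
        have := (Finset.sum_eq_zero_iff_of_nonneg
          (fun y _ => mul_nonneg (hν y) (hh y))).mp (hmh ▸ hd) x (Finset.mem_univ x)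
        rcases mul_eq_zero.mp this with h' | h'
        · exact absurd h' h0.ne'
        · exact h'
      have key := log_sum_half (hg x) (hh x) hmg0 hmh0 hca hdb
      have hmulkey := mul_le_mul_of_nonneg_left key (le_of_lt h0)
      nlinarith [hmulkey]
  have e1 : ∑ x, (ν x * ((g x + h x) / 2) * Real.log ((g x + h x) / 2)
        - ν x * ((g x + h x) / 2) * Real.log ((mg + mh) / 2))
      = (∑ x, ν x * ((g x + h x) / 2) * Real.log ((g x + h x) / 2))
        - (∑ x, ν x * ((g x + h x) / 2)) * Real.log ((mg + mh) / 2) := by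
    rw [Finset.sum_sub_distrib, ← Finset.sum_mul]
  have e2 : ∑ x, ((ν x * g x * Real.log (g x) - ν x * g x * Real.log mg)
        + (ν x * h x * Real.log (h x) - ν x * h x * Real.log mh)) / 2
      = (((∑ x, ν x * g x * Real.log (g x)) - mg * Real.log mg)
        + ((∑ x, ν x * h x * Real.log (h x)) - mh * Real.log mh)) / 2 := by
    rw [← Finset.sum_div, Finset.sum_add_distrib, Finset.sum_sub_distrib,
      Finset.sum_sub_distrib, ← Finset.sum_mul, ← Finset.sum_mul, hmg, hmh]
  rw [e1, e2] at main
  unfold ent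
  rw [hmu] at main ⊢
  linarith [main]

end AuxLemmas

/-- Spin/edge factorization with constant `C` for the Edwards–Sokal measure `ν` implies
entropy contraction at rate `1 - 1/(2C)` for the chain `P = (K+T)/2`, where
`Kf = ν[f|A]` resamples spins given edges and `Tf = ν[f|σ]` resamples edges given spins. -/
theorem stmt14 {V : Type*} [Fintype V] [DecidableEq V]
    (E : Finset (V × V)) (q : ℕ) (hq : 2 ≤ q) (β : ℝ) (hβ : 0 < β)
    (C : ℝ) (hC : 1 ≤ C)
    (hfact : ∀ f : ((V → Fin q) × Finset (V × V)) → ℝ, (∀ z, 0 ≤ f z) →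
      ent (esMeasure E q β) f ≤
        C * (avgCondEnt (esMeasure E q β) Prod.fst f +
             avgCondEnt (esMeasure E q β) Prod.snd f)) :
    ∀ f : ((V → Fin q) × Finset (V × V)) → ℝ, (∀ z, 0 ≤ f z) →
      ent (esMeasure E q β)
        (fun z => (condMean (esMeasure E q β) Prod.snd f z +
                   condMean (esMeasure E q β) Prod.fst f z) / 2) ≤
        (1 - 1 / (2 * C)) * ent (esMeasure E q β) f := by
  intro f hf
  set ν := esMeasure E q β with hνdef
  have hν0 : ∀ z, 0 ≤ ν z := by
    intro z
    have hw : ∀ w : (V → Fin q) × Finset (V × V), 0 ≤ esWeight E q β w := by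
      intro w
      unfold esWeight
      have h1 : Real.exp (-β) ≤ 1 := by
        have h := Real.exp_le_exp.mpr (show -β ≤ 0 by linarith)
        rwa [Real.exp_zero] at h
      apply mul_nonneg
      · apply mul_nonneg
        · exact pow_nonneg (by linarith) _
        · exact pow_nonneg (Real.exp_pos _).le _
      · split <;> norm_num
    rw [hνdef]
    unfold esMeasure
    exact div_nonneg (hw z) (Finset.sum_nonneg fun w _ => hw w)
  have hK := ent_condMean ν hν0 Prod.snd f
  have hT := ent_condMean ν hν0 Prod.fst f
  have hconv := ent_avg_le ν hν0 (condMean ν Prod.snd f) (condMean ν Prod.fst f)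
    (condMean_nonneg ν hν0 Prod.snd f hf) (condMean_nonneg ν hν0 Prod.fst f hf)
  have hfa := hfact f hf
  have hC0 : 0 < C := lt_of_lt_of_le one_pos hC
  have h2 : ent ν f / C ≤ avgCondEnt ν Prod.fst f + avgCondEnt ν Prod.snd f := by
    rw [div_le_iff₀ hC0]
    linarith [hfa]
  have hfinal : (1 - 1 / (2 * C)) * ent ν f = ent ν f - (ent ν f / C) / 2 := by
    field_simp
  calc ent ν (fun z => (condMean ν Prod.snd f z + condMean ν Prod.fst f z) / 2)
      ≤ (ent ν (condMean ν Prod.snd f) + ent ν (condMean ν Prod.fst f)) / 2 := hconv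
    _ = ent ν f - (avgCondEnt ν Prod.fst f + avgCondEnt ν Prod.snd f) / 2 := by
        rw [hK, hT]; ring
    _ ≤ ent ν f - (ent ν f / C) / 2 := by linarith
    _ = (1 - 1 / (2 * C)) * ent ν f := hfinal.symm
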